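/- Define erfc(x) = (2/√π)·∫_x^∞ e^{−τ²} dτ, fix A, T∞ ∈ ℝ, and for r > 0, t > 0 define u(r,t) = A·[(1/s)·e^{−s²/4} − (√π/2)·erfc(s/2)] + T∞ with s = r/√t. Then u satisfies the three-dimensional radial heat equation ∂u/∂t(r,t) = ∂²u/∂r²(r,t) + (2/r)·∂u/∂r(r,t) for all r > 0, t > 0. -/

import Mathlib

open MeasureTheory

theorem erfc_hasDerivAt (erfc : ℝ → ℝ)
    (herfc : erfc = fun x => (2 / Real.sqrt Real.pi) * ∫ τ in Set.Ioi x, Real.exp (-τ ^ 2)) :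
    ∀ x : ℝ, HasDerivAt erfc (-(2 / Real.sqrt Real.pi) * Real.exp (-x ^ 2)) x := by
  intro x
  have hint : MeasureTheory.Integrable (fun τ : ℝ => Real.exp (-τ ^ 2)) := by
    have := integrable_exp_neg_mul_sq (b := 1) one_pos
    simpa using this
  have hkey : erfc = fun x : ℝ =>
      (2 / Real.sqrt Real.pi) * (∫ τ in Set.Ioi (0:ℝ), Real.exp (-τ ^ 2)) -
        (2 / Real.sqrt Real.pi) * ∫ τ in (0:ℝ)..x, Real.exp (-τ ^ 2) := by
    rw [herfc]
    funext y
    have h1 := intervalIntegral.integral_Iic_add_Ioi (b := y)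
      hint.integrableOn hint.integrableOn
    have h2 := intervalIntegral.integral_Iic_add_Ioi (b := (0:ℝ))
      hint.integrableOn hint.integrableOn
    have h3 := intervalIntegral.integral_Iic_sub_Iic (a := (0:ℝ)) (b := y)
      (f := fun τ : ℝ => Real.exp (-τ ^ 2)) (μ := volume)
      hint.integrableOn hint.integrableOn
    have : (∫ τ in Set.Ioi y, Real.exp (-τ ^ 2)) =
        (∫ τ in Set.Ioi (0:ℝ), Real.exp (-τ ^ 2)) - ∫ τ in (0:ℝ)..y, Real.exp (-τ ^ 2) := by
      linarith
    rw [this]; ring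
  rw [hkey]
  have hcont : Continuous (fun τ : ℝ => Real.exp (-τ ^ 2)) := by continuity
  have hder : HasDerivAt (fun y : ℝ => ∫ τ in (0:ℝ)..y, Real.exp (-τ ^ 2))
      (Real.exp (-x ^ 2)) x :=
    intervalIntegral.integral_hasDerivAt_right hint.intervalIntegrable
      (hcont.stronglyMeasurableAtFilter _ _) hcont.continuousAt
  have := ((hder.const_mul (2 / Real.sqrt Real.pi)).const_sub
    ((2 / Real.sqrt Real.pi) * ∫ τ in Set.Ioi (0:ℝ), Real.exp (-τ ^ 2)))
  simpa [neg_mul] using this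


/-- The three-dimensional Frank-sphere temperature field
`u(r,t) = A[(1/s)e^{−s²/4} − (√π/2)·erfc(s/2)] + T∞`, with `s = r/√t` and
`erfc(x) = (2/√π)∫_x^∞ e^{−τ²} dτ`, satisfies the three-dimensional radial heat
equation `u_t = u_rr + (2/r) u_r` for all `r > 0`, `t > 0`. -/
theorem frank_sphere_3d_solves_radial_heat
    (erfc : ℝ → ℝ)
    (herfc : erfc = fun x => (2 / Real.sqrt Real.pi) * ∫ τ in Set.Ioi x, Real.exp (-τ ^ 2))
    (A Tinf : ℝ)
    (u : ℝ → ℝ → ℝ)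
    (hu : u = fun r t =>
      A * ((1 / (r / Real.sqrt t)) * Real.exp (-(r / Real.sqrt t) ^ 2 / 4) -
        (Real.sqrt Real.pi / 2) * erfc ((r / Real.sqrt t) / 2)) + Tinf) :
    ∀ r : ℝ, 0 < r → ∀ t : ℝ, 0 < t →
      deriv (fun t' => u r t') t =
        deriv (deriv (fun r' => u r' t)) r + (2 / r) * deriv (fun r' => u r' t) r := by
  intro r hr t ht
  have herfc' := erfc_hasDerivAt erfc herfc
  have hπ : (0:ℝ) < Real.sqrt Real.pi := Real.sqrt_pos.mpr Real.pi_pos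
  have hπ' : Real.sqrt Real.pi ≠ 0 := ne_of_gt hπ
  have hst : (0:ℝ) < Real.sqrt t := Real.sqrt_pos.mpr ht
  have hst' : Real.sqrt t ≠ 0 := ne_of_gt hst
  have htt : Real.sqrt t * Real.sqrt t = t := Real.mul_self_sqrt ht.le
  -- derivative of the profile F s = A*((1/s)e^{-s²/4} - (√π/2)erfc(s/2)) + Tinf
  have hF : ∀ s : ℝ, s ≠ 0 → HasDerivAt
      (fun s' : ℝ => A * ((1 / s') * Real.exp (-s' ^ 2 / 4) -
        (Real.sqrt Real.pi / 2) * erfc (s' / 2)) + Tinf)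
      (-A * Real.exp (-s ^ 2 / 4) / s ^ 2) s := by
    intro s hs
    have h1 : HasDerivAt (fun s' : ℝ => 1 / s') (-(1 / s ^ 2)) s := by
      simpa [one_div] using hasDerivAt_inv hs
    have h2arg : HasDerivAt (fun s' : ℝ => -s' ^ 2 / 4) (-(2 * s) / 4) s := by
      have := ((hasDerivAt_pow 2 s).neg).div_const 4
      simpa [mul_comm] using this
    have h2 : HasDerivAt (fun s' : ℝ => Real.exp (-s' ^ 2 / 4))
        (Real.exp (-s ^ 2 / 4) * (-(2 * s) / 4)) s := h2arg.exp
    have h3arg : HasDerivAt (fun s' : ℝ => s' / 2) (1 / 2 : ℝ) s := by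
      simpa using (hasDerivAt_id s).div_const 2
    have h3 : HasDerivAt (fun s' : ℝ => erfc (s' / 2))
        ((-(2 / Real.sqrt Real.pi) * Real.exp (-(s / 2) ^ 2)) * (1 / 2)) s :=
      (herfc' (s / 2)).comp s h3arg
    have hD := (((h1.mul h2).sub (h3.const_mul (Real.sqrt Real.pi / 2))).const_mul A).add_const Tinf
    refine hD.congr_deriv ?_
    symm
    have harg : -(s / 2) ^ 2 = -s ^ 2 / 4 := by ring
    rw [harg]
    field_simp
    ring
  -- time derivative
  have hstt : HasDerivAt (fun t' : ℝ => r / Real.sqrt t') (-r / (2 * t * Real.sqrt t)) t := by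
    have hsq := Real.hasDerivAt_sqrt (ne_of_gt ht)
    have := (hasDerivAt_const t r).div hsq hst'
    refine this.congr_deriv ?_
    symm
    rw [Real.sq_sqrt ht.le]
    field_simp
    ring
  have hne : r / Real.sqrt t ≠ 0 := div_ne_zero (ne_of_gt hr) hst'
  have hut : HasDerivAt (fun t' => u r t')
      ((-A * Real.exp (-(r / Real.sqrt t) ^ 2 / 4) / (r / Real.sqrt t) ^ 2) *
        (-r / (2 * t * Real.sqrt t))) t := by
    rw [hu]
    exact (hF (r / Real.sqrt t) hne).comp t hstt
  -- space derivative, valid at every r' > 0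
  have hur : ∀ r' : ℝ, 0 < r' → HasDerivAt (fun x => u x t)
      (-A * Real.sqrt t * (Real.exp (-r' ^ 2 / (4 * t)) / r' ^ 2)) r' := by
    intro r' hr'
    have hne' : r' / Real.sqrt t ≠ 0 := div_ne_zero (ne_of_gt hr') hst'
    have hlin : HasDerivAt (fun x : ℝ => x / Real.sqrt t) (1 / Real.sqrt t) r' := by
      simpa using (hasDerivAt_id r').div_const (Real.sqrt t)
    have := (hF (r' / Real.sqrt t) hne').comp r' hlin
    rw [hu]
    refine this.congr_deriv ?_
    symm
    have harg : -(r' / Real.sqrt t) ^ 2 / 4 = -r' ^ 2 / (4 * t) := by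
      rw [div_pow, Real.sq_sqrt ht.le]; ring
    rw [harg]
    field_simp
  -- second space derivative
  have hG : HasDerivAt (fun r' : ℝ => -A * Real.sqrt t * (Real.exp (-r' ^ 2 / (4 * t)) / r' ^ 2))
      (-A * Real.sqrt t *
        ((Real.exp (-r ^ 2 / (4 * t)) * (-(2 * r) / (4 * t)) * r ^ 2 -
          Real.exp (-r ^ 2 / (4 * t)) * (2 * r)) / (r ^ 2) ^ 2)) r := by
    have harg : HasDerivAt (fun r' : ℝ => -r' ^ 2 / (4 * t)) (-(2 * r) / (4 * t)) r := by
      have := ((hasDerivAt_pow 2 r).neg).div_const (4 * t)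
      simpa [mul_comm] using this
    have hexp := harg.exp
    have hpow : HasDerivAt (fun r' : ℝ => r' ^ 2) (2 * r) r := by
      simpa using hasDerivAt_pow 2 r
    have := (hexp.div hpow (by positivity)).const_mul (-A * Real.sqrt t)
    simpa [pow_one] using this
  -- assemble
  have hd1 : deriv (fun r' => u r' t) r
      = -A * Real.sqrt t * (Real.exp (-r ^ 2 / (4 * t)) / r ^ 2) := (hur r hr).deriv
  have heq : deriv (fun r' => u r' t)
      =ᶠ[nhds r] fun r' => -A * Real.sqrt t * (Real.exp (-r' ^ 2 / (4 * t)) / r' ^ 2) := by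
    filter_upwards [Ioi_mem_nhds hr] with x hx
    exact (hur x hx).deriv
  have hd2 : deriv (deriv (fun r' => u r' t)) r
      = -A * Real.sqrt t *
        ((Real.exp (-r ^ 2 / (4 * t)) * (-(2 * r) / (4 * t)) * r ^ 2 -
          Real.exp (-r ^ 2 / (4 * t)) * (2 * r)) / (r ^ 2) ^ 2) := by
    rw [heq.deriv_eq]
    exact hG.deriv
  have hdt : deriv (fun t' => u r t') t
      = (-A * Real.exp (-(r / Real.sqrt t) ^ 2 / 4) / (r / Real.sqrt t) ^ 2) *
        (-r / (2 * t * Real.sqrt t)) := hut.deriv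
  rw [hdt, hd1, hd2]
  have harg : -(r / Real.sqrt t) ^ 2 / 4 = -r ^ 2 / (4 * t) := by
    rw [div_pow, Real.sq_sqrt ht.le]; ring
  rw [harg]
  have hr' : r ≠ 0 := ne_of_gt hr
  have ht' : t ≠ 0 := ne_of_gt ht
  field_simp
  ring
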